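/- Let a ∈ ℂ and let R(z) be a formal power series over ℂ. Let v(z) = z·(1 + 2a z + z²)^{−1}, a formal power series with zero constant term. If the substitution of v into R satisfies R(v(z)) = a + z as formal power series, then R satisfies the quadratic identity z·(R(z) − a)² + (2a z − 1)·(R(z) − a) + z = 0 in the ring of formal power series over ℂ. -/

import Mathlib

open PowerSeries Finset

/-- Substitution (composition) `R(v(z))` of a formal power series `v` with zero constant
term into a formal power series `R`, defined coefficientwise:
the `n`-th coefficient of `R(v)` is `Σ_{k=0}^{n} R_k · (coeff n of v^k)`
(the sum may be truncated at `k = n` since `v` has zero constant term). -/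
noncomputable def psSubst (v R : PowerSeries ℂ) : PowerSeries ℂ :=
  PowerSeries.mk fun n =>
    ∑ k ∈ Finset.range (n + 1), PowerSeries.coeff k R * PowerSeries.coeff n (v ^ k)

namespace PsAux

variable {v : PowerSeries ℂ}

lemma coeff_pow_eq_zero (hv : constantCoeff v = 0) :
    ∀ k i : ℕ, i < k → coeff i (v ^ k) = 0 := by
  intro k
  induction k with
  | zero => intro i h; omega
  | succ k ih =>
      intro i h
      rw [pow_succ, coeff_mul]
      refine Finset.sum_eq_zero fun p hp => ?_
      rw [Finset.HasAntidiagonal.mem_antidiagonal] at hp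
      rcases Nat.eq_zero_or_pos p.2 with h2 | h2
      · have : coeff p.2 v = 0 := by
          rw [h2]; simpa using hv
        simp [this]
      · have : p.1 < k := by omega
        rw [ih p.1 this, zero_mul]

lemma coeff_psSubst_of_le (hv : constantCoeff v = 0) (f : PowerSeries ℂ) {n N : ℕ}
    (hN : n + 1 ≤ N) :
    coeff n (psSubst v f) = ∑ k ∈ Finset.range N, coeff k f * coeff n (v ^ k) := by
  rw [psSubst, coeff_mk]
  refine Finset.sum_subset (Finset.range_subset_range.2 hN) fun k hk hk' => ?_
  rw [Finset.mem_range] at *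
  rw [coeff_pow_eq_zero hv k n (by omega), mul_zero]

lemma psSubst_add (f g : PowerSeries ℂ) :
    psSubst v (f + g) = psSubst v f + psSubst v g := by
  ext n
  simp [psSubst, Finset.sum_add_distrib, add_mul]

lemma psSubst_sub (f g : PowerSeries ℂ) :
    psSubst v (f - g) = psSubst v f - psSubst v g := by
  ext n
  simp [psSubst, Finset.sum_sub_distrib, sub_mul]

lemma psSubst_C (c : ℂ) : psSubst v (C c) = C c := by
  ext n
  rw [psSubst, coeff_mk]
  rw [Finset.sum_eq_single 0]
  · simp [coeff_C]
  · intro k hk hk0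
    simp [coeff_C, hk0]
  · simp

lemma psSubst_one : psSubst v (1 : PowerSeries ℂ) = 1 := by
  simpa using psSubst_C (v := v) 1

lemma psSubst_X (hv : constantCoeff v = 0) : psSubst v X = v := by
  ext n
  rw [psSubst, coeff_mk]
  rw [Finset.sum_eq_single 1]
  · simp
  · intro k hk hk1
    simp [coeff_X, hk1]
  · intro h
    rw [Finset.mem_range] at h
    have hn : n = 0 := by omega
    subst hn
    simpa using hv

lemma psSubst_mul (hv : constantCoeff v = 0) (f g : PowerSeries ℂ) :
    psSubst v (f * g) = psSubst v f * psSubst v g := by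
  ext n
  rw [coeff_mul]
  have hR : ∀ p : ℕ × ℕ, p ∈ antidiagonal n →
      coeff p.1 (psSubst v f) * coeff p.2 (psSubst v g)
        = ∑ k ∈ range (n+1), ∑ l ∈ range (n+1),
            (coeff k f * coeff l g) * (coeff p.1 (v ^ k) * coeff p.2 (v ^ l)) := by
    intro p hp
    rw [Finset.HasAntidiagonal.mem_antidiagonal] at hp
    rw [coeff_psSubst_of_le hv f (N := n+1) (by omega),
        coeff_psSubst_of_le hv g (N := n+1) (by omega),
        Finset.sum_mul_sum]
    apply Finset.sum_congr rfl; intro k _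
    apply Finset.sum_congr rfl; intro l _
    ring
  rw [Finset.sum_congr rfl hR]
  rw [Finset.sum_comm]
  have step : ∀ k ∈ range (n+1),
      ∑ p ∈ antidiagonal n, ∑ l ∈ range (n+1),
          (coeff k f * coeff l g) * (coeff p.1 (v ^ k) * coeff p.2 (v ^ l))
        = ∑ l ∈ range (n+1), (coeff k f * coeff l g) * coeff n (v ^ (k + l)) := by
    intro k _
    rw [Finset.sum_comm]
    refine Finset.sum_congr rfl fun l _ => ?_
    rw [← Finset.mul_sum, pow_add, coeff_mul]
  rw [Finset.sum_congr rfl step]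
  -- now RHS (of goal, as rewritten) is double sum over square; LHS is sum over k of psSubst coeffs
  rw [coeff_psSubst_of_le hv (f * g) (N := n+1) (by omega)]
  have lhs_eq : ∀ m ∈ range (n+1),
      coeff m (f * g) * coeff n (v ^ m)
        = ∑ p ∈ antidiagonal m, (coeff p.1 f * coeff p.2 g) * coeff n (v ^ (p.1 + p.2)) := by
    intro m _
    rw [coeff_mul, Finset.sum_mul]
    refine Finset.sum_congr rfl fun p hp => ?_
    rw [Finset.HasAntidiagonal.mem_antidiagonal] at hp
    rw [hp]
  rw [Finset.sum_congr rfl lhs_eq]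
  -- both sides: sum over pairs; use fiberwise
  have hfib :
      ∑ m ∈ range (n+1), ∑ p ∈ antidiagonal m,
          (coeff p.1 f * coeff p.2 g) * coeff n (v ^ (p.1 + p.2))
        = ∑ p ∈ (range (n+1) ×ˢ range (n+1)).filter (fun p => p.1 + p.2 ≤ n),
            (coeff p.1 f * coeff p.2 g) * coeff n (v ^ (p.1 + p.2)) := by
    rw [← Finset.sum_fiberwise_of_maps_to (g := fun p : ℕ × ℕ => p.1 + p.2)
        (t := range (n+1)) (fun p hp => by
          simp only [Finset.mem_filter] at hp
          simp only [Finset.mem_range]; omega)]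
    refine Finset.sum_congr rfl fun m hm => ?_
    rw [Finset.mem_range] at hm
    refine Finset.sum_congr ?_ fun _ _ => rfl
    ext p
    simp only [Finset.mem_filter, Finset.mem_product, Finset.mem_range,
      Finset.HasAntidiagonal.mem_antidiagonal]
    omega
  rw [hfib]
  rw [← Finset.sum_product']
  rw [← Finset.sum_filter_add_sum_filter_not (range (n+1) ×ˢ range (n+1))
      (fun p => p.1 + p.2 ≤ n)]
  have : ∑ p ∈ (range (n+1) ×ˢ range (n+1)).filter (fun p => ¬ p.1 + p.2 ≤ n),
      (coeff p.1 f * coeff p.2 g) * coeff n (v ^ (p.1 + p.2)) = 0 := by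
    refine Finset.sum_eq_zero fun p hp => ?_
    rw [Finset.mem_filter] at hp
    rw [coeff_pow_eq_zero hv _ _ (by omega), mul_zero]
  rw [this, add_zero]

lemma psSubst_injective {w : PowerSeries ℂ} (hw : constantCoeff w = 1)
    {f : PowerSeries ℂ} (hf : psSubst (X * w) f = 0) : f = 0 := by
  have hv : constantCoeff (X * w) = 0 := by simp
  have key : ∀ n, coeff n ((X * w) ^ n) = 1 := by
    intro n
    have h1 : coeff n ((X * w) ^ n) = coeff 0 (w ^ n) := by
      rw [mul_pow]
      simpa using coeff_X_pow_mul (w ^ n) n 0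
    rw [h1, coeff_zero_eq_constantCoeff, map_pow, hw, one_pow]
  ext n
  induction n using Nat.strong_induction_on with
  | _ n ih =>
    have h0 : coeff n (psSubst (X * w) f) = 0 := by rw [hf]; simp
    rw [psSubst, coeff_mk, Finset.sum_range_succ] at h0
    have hz : ∑ k ∈ range n, coeff k f * coeff n ((X * w) ^ k) = 0 := by
      refine Finset.sum_eq_zero fun k hk => ?_
      rw [Finset.mem_range] at hk
      simp [ih k hk]
    rw [hz, zero_add, key n, mul_one] at h0
    simpa using h0

end PsAux

theorem stmt_4 (a : ℂ) (R : PowerSeries ℂ)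
    (h : psSubst
        (PowerSeries.X *
          (1 + PowerSeries.C (2 * a) * PowerSeries.X + PowerSeries.X ^ 2)⁻¹) R
        = PowerSeries.C a + PowerSeries.X) :
    PowerSeries.X * (R - PowerSeries.C a) ^ 2
      + (PowerSeries.C (2 * a) * PowerSeries.X - 1) * (R - PowerSeries.C a)
      + PowerSeries.X = 0 := by
  classical
  set u : PowerSeries ℂ := 1 + PowerSeries.C (2 * a) * PowerSeries.X + PowerSeries.X ^ 2 with hu_def
  set w : PowerSeries ℂ := u⁻¹ with hw_def
  set v : PowerSeries ℂ := PowerSeries.X * w with hv_def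
  have hu : constantCoeff u = 1 := by simp [hu_def]
  have hw : constantCoeff w = 1 := by
    rw [hw_def, PowerSeries.constantCoeff_inv, hu, inv_one]
  have huw : u * w = 1 := PowerSeries.mul_inv_cancel u (by rw [hu]; exact one_ne_zero)
  have hv0 : constantCoeff v = 0 := by simp [hv_def]
  have hS : psSubst v (R - PowerSeries.C a) = PowerSeries.X := by
    rw [PsAux.psSubst_sub, PsAux.psSubst_C, h]
    ring
  have e1 : psSubst v (PowerSeries.X * (R - PowerSeries.C a) ^ 2)
      = v * PowerSeries.X ^ 2 := by
    rw [sq, PsAux.psSubst_mul hv0, PsAux.psSubst_mul hv0, PsAux.psSubst_X hv0, hS]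
    ring
  have e2 : psSubst v ((PowerSeries.C (2 * a) * PowerSeries.X - 1) * (R - PowerSeries.C a))
      = (PowerSeries.C (2 * a) * v - 1) * PowerSeries.X := by
    rw [PsAux.psSubst_mul hv0, hS, PsAux.psSubst_sub, PsAux.psSubst_mul hv0,
        PsAux.psSubst_C, PsAux.psSubst_one, PsAux.psSubst_X hv0]
  have hT : psSubst v (PowerSeries.X * (R - PowerSeries.C a) ^ 2
      + (PowerSeries.C (2 * a) * PowerSeries.X - 1) * (R - PowerSeries.C a)
      + PowerSeries.X) = 0 := by
    rw [PsAux.psSubst_add, PsAux.psSubst_add, e1, e2, PsAux.psSubst_X hv0]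
    have : v * PowerSeries.X ^ 2
        + (PowerSeries.C (2 * a) * v - 1) * PowerSeries.X + v
        = PowerSeries.X * (u * w) - PowerSeries.X := by
      rw [hu_def, hv_def]; ring
    rw [this, huw]; ring
  exact PsAux.psSubst_injective hw hT
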